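/- For real q with 0 < q < 1, the infinite series ∑_{k=1}^∞ (-1)^{k+1} q^{k(k+1)/2} / ((1-q)(1-q^2)⋯(1-q^{k-1})(1-q^k)^2) equals ∑_{k=1}^∞ q^k/(1-q^k). -/

import Mathlib

open Finset Filter Topology
set_option linter.unusedSectionVars false
set_option maxHeartbeats 1000000

noncomputable def Qp (q : ℝ) (n : ℕ) : ℝ := ∏ i ∈ Finset.range n, (1 - q ^ (i + 1))

noncomputable def gb (q : ℝ) (n r : ℕ) : ℝ := Qp q n / (Qp q r * Qp q (n - r))

noncomputable def Fu (q : ℝ) (k r : ℕ) : ℝ :=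
  if r ≤ k then q^(k+1) * ((-1)^r * q^(r*(r+1)/2) * (Qp q k / (Qp q r * Qp q (k - r))) / (1-q^(r+1))) else 0

noncomputable def ga (q : ℝ) (n r : ℕ) : ℝ := (-1)^r * q^(r*(r+1)/2) * gb q n r

lemma tri_succ (r : ℕ) : (r+1)*(r+2)/2 = r*(r+1)/2 + (r+1) := by
  have h1 : (r+1)*(r+2) = r*(r+1) + 2*(r+1) := by ring
  have h2 : 2 ∣ r*(r+1) := (Nat.even_mul_succ_self r).two_dvd
  omega

section Uch

variable {q : ℝ} (hq0 : 0 < q) (hq1 : q < 1)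
include hq0 hq1

lemma upow_lt_one (n : ℕ) : q ^ (n + 1) < 1 :=
  pow_lt_one₀ hq0.le hq1 n.succ_ne_zero

lemma usub_pos (n : ℕ) : 0 < 1 - q ^ (n + 1) := by
  have := upow_lt_one hq0 hq1 n; linarith

lemma Qp_pos (n : ℕ) : 0 < Qp q n :=
  Finset.prod_pos fun i _ => usub_pos hq0 hq1 i

lemma Qp_le_one (n : ℕ) : Qp q n ≤ 1 :=
  Finset.prod_le_one (fun i _ => (usub_pos hq0 hq1 i).le)
    (fun i _ => by have := pow_pos hq0 (i + 1); linarith)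

omit hq0 hq1 in
lemma Qp_succ (n : ℕ) : Qp q (n + 1) = Qp q n * (1 - q ^ (n + 1)) :=
  Finset.prod_range_succ _ n

omit hq0 hq1 in
lemma Qp_zero : Qp q 0 = 1 := Finset.prod_range_zero _

omit hq0 hq1 in
lemma Qp_add (m r : ℕ) :
    Qp q (m + r) = Qp q m * ∏ i ∈ Finset.range r, (1 - q ^ m * q ^ (i + 1)) := by
  rw [Qp, Finset.prod_range_add]
  have : ∀ i ∈ Finset.range r, (1 - q ^ (m + i + 1)) = (1 - q ^ m * q ^ (i + 1)) := by
    intro i _; rw [← pow_add]; ring_nf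
  rw [Finset.prod_congr rfl this]; rfl

lemma Qp_anti {n m : ℕ} (h : n ≤ m) : Qp q m ≤ Qp q n := by
  obtain ⟨d, rfl⟩ := Nat.exists_eq_add_of_le h
  rw [Qp, Finset.prod_range_add]
  have h1 : (∏ i ∈ Finset.range d, (1 - q ^ (n + i + 1))) ≤ 1 :=
    Finset.prod_le_one (fun i _ => (usub_pos hq0 hq1 (n + i)).le)
      (fun i _ => by have := pow_pos hq0 (n + i + 1); linarith)
  calc Qp q n * ∏ i ∈ Finset.range d, (1 - q ^ (n + i + 1))
      ≤ Qp q n * 1 := by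
        apply mul_le_mul_of_nonneg_left h1 (Qp_pos hq0 hq1 n).le
    _ = Qp q n := mul_one _


lemma gb_zero (n : ℕ) : gb q n 0 = 1 := by
  rw [gb, Nat.sub_zero, Qp_zero, one_mul, div_self (ne_of_gt (Qp_pos hq0 hq1 n))]

lemma gb_self (n : ℕ) : gb q n n = 1 := by
  rw [gb, Nat.sub_self, Qp_zero, mul_one, div_self (ne_of_gt (Qp_pos hq0 hq1 n))]

lemma gb_pos (n r : ℕ) : 0 < gb q n r :=
  div_pos (Qp_pos hq0 hq1 n) (mul_pos (Qp_pos hq0 hq1 r) (Qp_pos hq0 hq1 _))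

lemma gb_le {n r : ℕ} (h : r ≤ n) : gb q n r ≤ 1 / Qp q r := by
  rw [gb, div_le_div_iff₀ (mul_pos (Qp_pos hq0 hq1 r) (Qp_pos hq0 hq1 _)) (Qp_pos hq0 hq1 r)]
  have h1 : Qp q n ≤ Qp q (n - r) := Qp_anti hq0 hq1 (Nat.sub_le n r)
  have h2 := Qp_pos hq0 hq1 r
  have h3 := Qp_pos hq0 hq1 (n - r)
  nlinarith

lemma gb_pascal {n r : ℕ} (h : r < n) :
    gb q (n + 1) (r + 1) = gb q n (r + 1) + q ^ (n - r) * gb q n r := by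
  obtain ⟨d, rfl⟩ : ∃ d, n = r + d + 1 := ⟨n - r - 1, by omega⟩
  have e1 : r + d + 1 + 1 - (r + 1) = d + 1 := by omega
  have e2 : r + d + 1 - (r + 1) = d := by omega
  have e3 : r + d + 1 - r = d + 1 := by omega
  have e4 : r + d + 1 - r - 1 = d := by omega
  rw [gb, gb, gb, e1, e2, e3]
  have hQr := Qp_pos hq0 hq1 r
  have hQd := Qp_pos hq0 hq1 d
  have hQn := Qp_pos hq0 hq1 (r + d + 1)
  have hs1 := usub_pos hq0 hq1 r
  have hs2 := usub_pos hq0 hq1 d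
  have key : (1 - q ^ (r + d + 1 + 1)) = (1 - q ^ (d + 1)) + q ^ (d + 1) * (1 - q ^ (r + 1)) := by
    have : q ^ (d + 1) * q ^ (r + 1) = q ^ (r + d + 1 + 1) := by rw [← pow_add]; ring_nf
    linarith [this]
  have hn1 : Qp q (r + d + 1 + 1) = Qp q (r + d + 1) * (1 - q ^ (r + d + 1 + 1)) :=
    Qp_succ _
  have hr1 : Qp q (r + 1) = Qp q r * (1 - q ^ (r + 1)) := Qp_succ r
  have hd1 : Qp q (d + 1) = Qp q d * (1 - q ^ (d + 1)) := Qp_succ d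
  rw [hn1, hr1, hd1, key]
  field_simp


lemma ga_zero (n : ℕ) : ga q n 0 = 1 := by
  simp [ga, gb_zero hq0 hq1]

lemma ga_pascal {j r : ℕ} (hr : r < j) :
    ga q (j+1) (r+1) = ga q j (r+1) - q^(j+1) * ga q j r := by
  rw [ga, ga, ga, gb_pascal hq0 hq1 hr]
  have he : q^((r+1)*(r+1+1)/2) * q^(j-r) = q^(j+1) * q^(r*(r+1)/2) := by
    rw [← pow_add, ← pow_add]
    congr 1
    have := tri_succ r
    have h0 : (r+1)*(r+1+1) = (r+1)*(r+2) := by ring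
    omega
  have hs : ((-1):ℝ)^(r+1) = -(-1)^r := by rw [pow_succ]; ring
  rw [hs]
  linear_combination (-(-1:ℝ)^r * gb q j r) * he

lemma ga_top (j : ℕ) : ga q (j+1) (j+1) = -(q^(j+1) * ga q j j) := by
  rw [ga, ga, gb_self hq0 hq1, gb_self hq0 hq1]
  have he : q^((j+1)*(j+2)/2) = q^(j+1) * q^(j*(j+1)/2) := by
    rw [← pow_add]
    congr 1
    have := tri_succ j
    omega
  rw [he, pow_succ]
  ring

lemma gauss (j : ℕ) (x : ℝ) :
    ∏ i ∈ Finset.range j, (1 - x * q^(i+1)) = ∑ r ∈ Finset.range (j+1), ga q j r * x^r := by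
  induction j with
  | zero => simp [ga_zero hq0 hq1]
  | succ j ih =>
    rw [Finset.prod_range_succ, ih]
    have l0 : (∑ r ∈ Finset.range (j+1), ga q j r * x^r) * (1 - x * q^(j+1))
        = (∑ r ∈ Finset.range (j+1), ga q j r * x^r)
          - ∑ r ∈ Finset.range (j+1), (q^(j+1) * ga q j r) * x^(r+1) := by
      rw [Finset.sum_mul, ← Finset.sum_sub_distrib]
      exact Finset.sum_congr rfl fun r _ => by ring
    rw [l0]
    rw [Finset.sum_range_succ' (fun r => ga q j r * x^r) j,
        Finset.sum_range_succ (fun r => (q^(j+1) * ga q j r) * x^(r+1)) j,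
        Finset.sum_range_succ' (fun r => ga q (j+1) r * x^r) (j+1),
        Finset.sum_range_succ (fun r => ga q (j+1) (r+1) * x^(r+1)) j]
    have hm : ∀ r ∈ Finset.range j, ga q (j+1) (r+1) * x^(r+1)
        = ga q j (r+1) * x^(r+1) - (q^(j+1) * ga q j r) * x^(r+1) := by
      intro r hr
      rw [ga_pascal hq0 hq1 (Finset.mem_range.mp hr)]
      ring
    rw [Finset.sum_congr rfl hm, Finset.sum_sub_distrib, ga_top hq0 hq1,
        ga_zero hq0 hq1, ga_zero hq0 hq1]
    ring


lemma key1 (j : ℕ) :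
    HasSum (fun t : ℕ => q^t * ∏ i ∈ Finset.range j, (1 - q^t * q^(i+1)))
      (1/(1-q^(j+1))) := by
  set c : ℕ → ℝ := fun t => (1 - q^t) * (∏ i ∈ Finset.range j, (1 - q^t * q^(i+1))) / (1 - q^(j+1)) with hc
  have hne := (usub_pos hq0 hq1 j).ne'
  have hstep : ∀ t : ℕ, c (t+1) - c t = q^t * ∏ i ∈ Finset.range j, (1 - q^t * q^(i+1)) := by
    intro t
    have A1 : (1 - q^(t+1)) * ∏ i ∈ Finset.range j, (1 - q^(t+1) * q^(i+1))
        = ∏ i ∈ Finset.range (j+1), (1 - q^t * q^(i+1)) := by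
      have hcong : ∀ i ∈ Finset.range j, (1 - q^(t+1) * q^(i+1)) = (1 - q^t * q^(i+1+1)) :=
        fun i _ => by ring
      calc (1 - q^(t+1)) * ∏ i ∈ Finset.range j, (1 - q^(t+1) * q^(i+1))
          = (∏ i ∈ Finset.range j, (1 - q^t * q^(i+1+1))) * (1 - q^t * q^(0+1)) := by
            rw [Finset.prod_congr rfl hcong]; ring
        _ = ∏ i ∈ Finset.range (j+1), (1 - q^t * q^(i+1)) :=
            (Finset.prod_range_succ' (fun i => 1 - q^t * q^(i+1)) j).symm
    have A2 : (1 - q^t * q^(j+1)) * ∏ i ∈ Finset.range j, (1 - q^t * q^(i+1))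
        = ∏ i ∈ Finset.range (j+1), (1 - q^t * q^(i+1)) := by
      rw [Finset.prod_range_succ]; ring
    have e : c (t+1) - c t = ((1 - q^(t+1)) * ∏ i ∈ Finset.range j, (1 - q^(t+1) * q^(i+1))
        - (1 - q^t) * ∏ i ∈ Finset.range j, (1 - q^t * q^(i+1)))/(1-q^(j+1)) := by
      simp only [hc]; ring
    rw [e, A1, ← A2, div_eq_iff hne]; ring
  have hpart : ∀ N : ℕ, ∑ t ∈ Finset.range N, (q^t * ∏ i ∈ Finset.range j, (1 - q^t * q^(i+1))) = c N := by
    intro N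
    calc ∑ t ∈ Finset.range N, (q^t * ∏ i ∈ Finset.range j, (1 - q^t * q^(i+1)))
        = ∑ t ∈ Finset.range N, (c (t+1) - c t) :=
          Finset.sum_congr rfl fun t _ => (hstep t).symm
      _ = c N - c 0 := Finset.sum_range_sub c N
      _ = c N := by simp [hc]
  have hq' : Tendsto (fun N : ℕ => q^N) atTop (𝓝 0) :=
    tendsto_pow_atTop_nhds_zero_of_lt_one hq0.le hq1
  have h1 : Tendsto (fun N : ℕ => 1 - q^N) atTop (𝓝 1) := by
    simpa using tendsto_const_nhds.sub hq'
  have h2 : Tendsto (fun N : ℕ => ∏ i ∈ Finset.range j, (1 - q^N * q^(i+1))) atTop (𝓝 1) := by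
    have h3 : ∀ i ∈ Finset.range j,
        Tendsto (fun N : ℕ => 1 - q^N * q^(i+1)) atTop (𝓝 1) := by
      intro i _
      simpa using tendsto_const_nhds.sub (hq'.mul_const (q^(i+1)))
    have := tendsto_finset_prod (Finset.range j) h3
    simpa using this
  have hlim : Tendsto c atTop (𝓝 (1/(1-q^(j+1)))) := by
    have := (h1.mul h2).div_const (1 - q^(j+1))
    simpa [hc] using this
  have hnn : ∀ t : ℕ, 0 ≤ q^t * ∏ i ∈ Finset.range j, (1 - q^t * q^(i+1)) := by
    intro t
    refine mul_nonneg (pow_nonneg hq0.le t) (Finset.prod_nonneg fun i _ => ?_)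
    have : q^t * q^(i+1) ≤ 1 := by
      rw [← pow_add]; exact pow_le_one₀ hq0.le hq1.le
    linarith
  rw [hasSum_iff_tendsto_nat_of_nonneg hnn]
  have : (fun N : ℕ => ∑ t ∈ Finset.range N, (q^t * ∏ i ∈ Finset.range j, (1 - q^t * q^(i+1)))) = c :=
    funext hpart
  rw [this]
  exact hlim


lemma key3 (j : ℕ) :
    ∑ r ∈ Finset.range (j+1), ga q j r / (1-q^(r+1)) = 1/(1-q^(j+1)) := by
  have hsum : ∀ r : ℕ, Summable (fun t : ℕ => ga q j r * (q^(r+1))^t) :=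
    fun r => (summable_geometric_of_lt_one (pow_nonneg hq0.le _) (upow_lt_one hq0 hq1 r)).mul_left _
  have h0 := (key1 hq0 hq1 j).tsum_eq
  rw [← h0]
  have h1 : ∀ t : ℕ, q^t * ∏ i ∈ Finset.range j, (1 - q^t * q^(i+1))
      = ∑ r ∈ Finset.range (j+1), ga q j r * (q^(r+1))^t := by
    intro t
    rw [gauss hq0 hq1 j (q^t), Finset.mul_sum]
    refine Finset.sum_congr rfl fun r _ => ?_
    have h2 : q^t * (q^t)^r = (q^(r+1))^t := by
      rw [← pow_mul, ← pow_mul, ← pow_add]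
      congr 1
      ring
    calc q^t * (ga q j r * (q^t)^r) = ga q j r * (q^t * (q^t)^r) := by ring
      _ = ga q j r * (q^(r+1))^t := by rw [h2]
  rw [tsum_congr h1, Summable.tsum_finsetSum (fun r _ => hsum r)]
  refine Finset.sum_congr rfl fun r _ => ?_
  rw [tsum_mul_left, tsum_geometric_of_lt_one (pow_nonneg hq0.le _) (upow_lt_one hq0 hq1 r),
    div_eq_mul_inv]

lemma key4 (r : ℕ) :
    HasSum (fun m : ℕ => q^m * gb q (m+r) r) (1/((1-q^(r+1)) * Qp q r)) := by
  have h := (key1 hq0 hq1 r).div_const (Qp q r)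
  have he : (fun m : ℕ => (q^m * ∏ i ∈ Finset.range r, (1 - q^m * q^(i+1))) / Qp q r)
      = fun m : ℕ => q^m * gb q (m+r) r := by
    funext m
    have hm := (Qp_pos hq0 hq1 m).ne'
    have hr := (Qp_pos hq0 hq1 r).ne'
    have h1 : gb q (m+r) r = (∏ i ∈ Finset.range r, (1 - q^m * q^(i+1))) / Qp q r := by
      rw [gb, Nat.add_sub_cancel, Qp_add]
      field_simp
    rw [h1]; ring
  rw [he, div_div] at h
  exact h


omit hq0 hq1 in
lemma Fu_eq (k r : ℕ) : Fu q k r = if r ≤ k then q^(k+1) * (ga q k r / (1-q^(r+1))) else 0 := rfl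

lemma gsum : Summable (fun r : ℕ => q^(r*(r+1)/2) / Qp q r) := by
  apply summable_of_ratio_norm_eventually_le (r := 1/2) (by norm_num)
  have hq' : Tendsto (fun n : ℕ => q^(n+1)) atTop (𝓝 0) :=
    (tendsto_pow_atTop_nhds_zero_of_lt_one hq0.le hq1).comp (tendsto_add_atTop_nat 1)
  have hev : ∀ᶠ n : ℕ in atTop, q^(n+1) < (1-q)/2 := hq'.eventually_lt_const (by linarith)
  filter_upwards [hev] with n hn
  have p1 : 0 < q^(n*(n+1)/2)/Qp q n :=
    div_pos (pow_pos hq0 _) (Qp_pos hq0 hq1 n)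
  have p2 : 0 < q^((n+1)*(n+2)/2)/Qp q (n+1) :=
    div_pos (pow_pos hq0 _) (Qp_pos hq0 hq1 (n+1))
  have e1 : q^((n+1)*(n+2)/2) = q^(n*(n+1)/2) * q^(n+1) := by
    rw [← pow_add, tri_succ]
  have hqle : q^(n+1) ≤ q := by
    calc q^(n+1) ≤ q^1 := pow_le_pow_of_le_one hq0.le hq1.le (by omega)
      _ = q := pow_one q
  have hdiv : q^(n+1)/(1-q^(n+1)) ≤ 1/2 := by
    rw [div_le_iff₀ (usub_pos hq0 hq1 n)]
    linarith
  rw [Real.norm_eq_abs, Real.norm_eq_abs, abs_of_pos p2, abs_of_pos p1]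
  calc q^((n+1)*(n+2)/2)/Qp q (n+1)
      = (q^(n*(n+1)/2)/Qp q n) * (q^(n+1)/(1-q^(n+1))) := by
        have hn1 := (Qp_pos hq0 hq1 n).ne'
        have hn2 := (usub_pos hq0 hq1 n).ne'
        rw [e1, Qp_succ]
        field_simp
    _ ≤ (q^(n*(n+1)/2)/Qp q n) * (1/2) := by
        exact mul_le_mul_of_nonneg_left hdiv p1.le
    _ = 1/2 * (q^(n*(n+1)/2)/Qp q n) := by ring

lemma FuSummable : Summable (Function.uncurry (Fu q)) := by
  apply Summable.of_norm_bounded (g := fun p : ℕ×ℕ => q^p.1 * ((q/(1-q)) * (q^(p.2*(p.2+1)/2)/Qp q p.2)))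
  · exact (summable_geometric_of_lt_one hq0.le hq1).mul_of_nonneg ((gsum hq0 hq1).mul_left _)
      (fun k => pow_nonneg hq0.le k)
      (fun r => mul_nonneg (div_nonneg hq0.le (by linarith))
        (div_nonneg (pow_nonneg hq0.le _) (Qp_pos hq0 hq1 _).le))
  · rintro ⟨k, r⟩
    show ‖Fu q k r‖ ≤ q^k * ((q/(1-q)) * (q^(r*(r+1)/2)/Qp q r))
    by_cases h : r ≤ k
    · have hpos : 0 < q^(k+1) * (q^(r*(r+1)/2) * gb q k r/(1-q^(r+1))) :=
        mul_pos (pow_pos hq0 _) (div_pos (mul_pos (pow_pos hq0 _) (gb_pos hq0 hq1 k r))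
          (usub_pos hq0 hq1 r))
      have habs : ‖Fu q k r‖ = q^(k+1) * (q^(r*(r+1)/2) * gb q k r/(1-q^(r+1))) := by
        rw [Fu_eq, if_pos h]
        have e : q^(k+1) * (ga q k r/(1-q^(r+1)))
            = (-1:ℝ)^r * (q^(k+1) * (q^(r*(r+1)/2) * gb q k r/(1-q^(r+1)))) := by
          rw [ga]; ring
        rw [e, norm_mul, norm_pow, norm_neg, norm_one, one_pow, one_mul,
          Real.norm_eq_abs, abs_of_pos hpos]
      rw [habs]
      have hgb : gb q k r ≤ 1/Qp q r := gb_le hq0 hq1 h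
      have hd : (1:ℝ) - q ≤ 1 - q^(r+1) := by
        have : q^(r+1) ≤ q := by
          calc q^(r+1) ≤ q^1 := pow_le_pow_of_le_one hq0.le hq1.le (by omega)
            _ = q := pow_one q
        linarith
      calc q^(k+1) * (q^(r*(r+1)/2) * gb q k r/(1-q^(r+1)))
          ≤ q^(k+1) * (q^(r*(r+1)/2) * (1/Qp q r)/(1-q)) := by
            apply mul_le_mul_of_nonneg_left ?_ (pow_nonneg hq0.le _)
            apply div_le_div₀ (mul_nonneg (pow_nonneg hq0.le _)
              (one_div_pos.mpr (Qp_pos hq0 hq1 r)).le)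
              (mul_le_mul_of_nonneg_left hgb (pow_nonneg hq0.le _))
              (by linarith) hd
        _ = q^k * ((q/(1-q)) * (q^(r*(r+1)/2)/Qp q r)) := by
            rw [pow_succ]; ring
    · rw [Fu_eq, if_neg h, norm_zero]
      exact mul_nonneg (pow_nonneg hq0.le _) (mul_nonneg (div_nonneg hq0.le (by linarith))
        (div_nonneg (pow_nonneg hq0.le _) (Qp_pos hq0 hq1 _).le))

lemma colSum (k : ℕ) : ∑' r : ℕ, Fu q k r = q^(k+1)/(1-q^(k+1)) := by
  rw [tsum_eq_sum (s := Finset.range (k+1))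
    (fun r hr => by rw [Fu_eq, if_neg (by simp at hr; omega)])]
  calc ∑ r ∈ Finset.range (k+1), Fu q k r
      = ∑ r ∈ Finset.range (k+1), q^(k+1) * (ga q k r/(1-q^(r+1))) :=
        Finset.sum_congr rfl fun r hr => by
          rw [Fu_eq, if_pos (by simp at hr; omega)]
    _ = q^(k+1) * ∑ r ∈ Finset.range (k+1), ga q k r/(1-q^(r+1)) := by
        rw [Finset.mul_sum]
    _ = q^(k+1) * (1/(1-q^(k+1))) := by rw [key3 hq0 hq1 k]
    _ = q^(k+1)/(1-q^(k+1)) := by ring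

lemma rowSum (r : ℕ) :
    ∑' k : ℕ, Fu q k r = (-1)^r * q^((r+1)*(r+2)/2) / (Qp q r * (1-q^(r+1))^2) := by
  have hsummable : Summable (fun k => Fu q k r) :=
    (FuSummable hq0 hq1).prod_symm.prod_factor r
  have h0 : ∑ i ∈ Finset.range r, Fu q i r = 0 := by
    apply Finset.sum_eq_zero
    intro i hi
    rw [Fu_eq, if_neg (by simp at hi; omega)]
  have h1 := (hsummable.sum_add_tsum_nat_add r).symm
  rw [h0, zero_add] at h1
  rw [h1]
  have h2 : ∀ m : ℕ, Fu q (m+r) r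
      = ((-1)^r * q^(r*(r+1)/2) * q^(r+1)/(1-q^(r+1))) * (q^m * gb q (m+r) r) := by
    intro m
    rw [Fu_eq, if_pos (Nat.le_add_left r m), ga]
    ring
  rw [tsum_congr h2, tsum_mul_left, (key4 hq0 hq1 r).tsum_eq]
  have e : q^(r*(r+1)/2) * q^(r+1) = q^((r+1)*(r+2)/2) := by
    rw [← pow_add, tri_succ]
  rw [← e]
  have h3 := (Qp_pos hq0 hq1 r).ne'
  have h4 := (usub_pos hq0 hq1 r).ne'
  field_simp

end Uch

theorem uchimura (q : ℝ) (hq0 : 0 < q) (hq1 : q < 1) :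
    ∑' k : ℕ, (-1 : ℝ) ^ (k + 1 + 1) * q ^ ((k + 1) * (k + 2) / 2) /
      ((∏ j ∈ Finset.Icc 1 k, (1 - q ^ j)) * (1 - q ^ (k + 1)) ^ 2)
    = ∑' k : ℕ, q ^ (k + 1) / (1 - q ^ (k + 1)) := by
  have hQ : ∀ k : ℕ, ∏ j ∈ Finset.Icc 1 k, (1 - q ^ j) = Qp q k := by
    intro k
    induction k with
    | zero => simp [Qp]
    | succ k ih =>
      rw [Finset.prod_Icc_succ_top (Nat.le_add_left 1 k), ih, Qp_succ]
  calc ∑' k : ℕ, (-1 : ℝ) ^ (k + 1 + 1) * q ^ ((k + 1) * (k + 2) / 2) /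
      ((∏ j ∈ Finset.Icc 1 k, (1 - q ^ j)) * (1 - q ^ (k + 1)) ^ 2)
      = ∑' (r : ℕ) (k : ℕ), Fu q k r := by
        apply tsum_congr
        intro r
        rw [rowSum hq0 hq1 r, hQ r,
          show ((-1):ℝ)^(r+1+1) = (-1)^r by rw [pow_succ, pow_succ]; ring]
    _ = ∑' (k : ℕ) (r : ℕ), Fu q k r := (FuSummable hq0 hq1).tsum_comm
    _ = ∑' k : ℕ, q ^ (k + 1) / (1 - q ^ (k + 1)) := tsum_congr (colSum hq0 hq1)
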